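/- Let F = [[0, I], [−G_p, −G_d]] be a 2n×2n block matrix where G_p and G_d are symmetric positive definite n×n matrices that commute. Then F is Hurwitz: every eigenvalue of F has negative real part. -/

import Mathlib

open Matrix Polynomial

private lemma eval_charpoly' {m : Type*} [Fintype m] [DecidableEq m]
    (M : Matrix m m ℂ) (μ : ℂ) :
    M.charpoly.eval μ = (μ • (1 : Matrix m m ℂ) - M).det := by
  have h : (charmatrix M).map (Polynomial.eval μ) = μ • (1 : Matrix m m ℂ) - M := by
    ext i j
    by_cases hij : i = j
    · subst hij; simp [charmatrix_apply_eq]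
    · simp [charmatrix_apply_ne _ _ _ hij, Matrix.one_apply_ne hij]
  rw [Matrix.charpoly, ← h, ← Polynomial.coe_evalRingHom, RingHom.map_det, RingHom.mapMatrix_apply]

private lemma posdef_dot {n : ℕ} (M : Matrix (Fin n) (Fin n) ℝ) (hM : M.PosDef)
    (x : Fin n → ℂ) (hx : x ≠ 0) :
    0 < (star x ⬝ᵥ (M.map Complex.ofReal) *ᵥ x).re ∧
      (star x ⬝ᵥ (M.map Complex.ofReal) *ᵥ x).im = 0 := by
  classical
  set a : Fin n → ℝ := fun i => (x i).re with ha
  set b : Fin n → ℝ := fun i => (x i).im with hb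
  have hsym : ∀ u w : Fin n → ℝ, u ⬝ᵥ M *ᵥ w = w ⬝ᵥ M *ᵥ u := by
    intro u w
    have hMt : Mᵀ = M := hM.isHermitian
    rw [Matrix.dotProduct_mulVec, ← Matrix.mulVec_transpose, hMt, dotProduct_comm]
  have hre : (star x ⬝ᵥ (M.map Complex.ofReal) *ᵥ x).re
      = a ⬝ᵥ M *ᵥ a + b ⬝ᵥ M *ᵥ b := by
    simp only [dotProduct, mulVec, Pi.star_apply, Complex.re_sum, Complex.mul_re,
      Complex.star_def, Complex.conj_re, Complex.conj_im, Complex.im_sum, map_apply,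
      Complex.mul_im, Finset.mul_sum, Finset.sum_mul, Complex.ofReal_re,
      Complex.ofReal_im]
    rw [← Finset.sum_add_distrib]
    apply Finset.sum_congr rfl
    intro i _
    rw [← Finset.sum_add_distrib]
    apply Finset.sum_congr rfl
    intro j _
    show (x i).re * (M i j * (x j).re - 0 * (x j).im) -
        -(x i).im * (M i j * (x j).im + 0 * (x j).re)
      = a i * (M i j * a j) + b i * (M i j * b j)
    simp only [ha, hb]
    ring
  have him : (star x ⬝ᵥ (M.map Complex.ofReal) *ᵥ x).im
      = a ⬝ᵥ M *ᵥ b - b ⬝ᵥ M *ᵥ a := by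
    simp only [dotProduct, mulVec, Pi.star_apply, Complex.re_sum, Complex.mul_re,
      Complex.star_def, Complex.conj_re, Complex.conj_im, Complex.im_sum, Complex.mul_im,
      Finset.mul_sum, Finset.sum_mul, Complex.ofReal_re, Complex.ofReal_im, map_apply]
    rw [← Finset.sum_sub_distrib]
    apply Finset.sum_congr rfl
    intro i _
    rw [← Finset.sum_sub_distrib]
    apply Finset.sum_congr rfl
    intro j _
    show (x i).re * (M i j * (x j).im + 0 * (x j).re) +
        -(x i).im * (M i j * (x j).re - 0 * (x j).im)
      = a i * (M i j * b j) - b i * (M i j * a j)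
    simp only [ha, hb]
    ring
  refine ⟨?_, by rw [him, hsym a b, sub_self]⟩
  rw [hre]
  have hab : a ≠ 0 ∨ b ≠ 0 := by
    by_contra hc
    push_neg at hc
    apply hx
    funext i
    have h1 := congrFun hc.1 i
    have h2 := congrFun hc.2 i
    simp only [ha, hb, Pi.zero_apply] at h1 h2
    exact Complex.ext h1 h2
  have hnn : ∀ u : Fin n → ℝ, 0 ≤ u ⬝ᵥ M *ᵥ u := by
    intro u
    simpa using hM.posSemidef.dotProduct_mulVec_nonneg u
  have hpos : ∀ u : Fin n → ℝ, u ≠ 0 → 0 < u ⬝ᵥ M *ᵥ u := by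
    intro u hu
    simpa using hM.dotProduct_mulVec_pos hu
  rcases hab with h | h
  · have := hpos a h; have := hnn b; linarith
  · have := hpos b h; have := hnn a; linarith

private lemma quad_root_neg_re {a d p : ℝ} (ha : 0 < a) (hd : 0 < d) (hp : 0 < p) {μ : ℂ}
    (h : (p : ℂ) + μ * d + μ ^ 2 * a = 0) : μ.re < 0 := by
  by_contra hs
  push_neg at hs
  have h1 := congrArg Complex.re h
  have h2 := congrArg Complex.im h
  simp only [Complex.add_re, Complex.add_im, Complex.mul_re, Complex.mul_im, pow_two,
    Complex.ofReal_re, Complex.ofReal_im, Complex.zero_re, Complex.zero_im] at h1 h2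
  set s := μ.re
  set t := μ.im
  have ht : t = 0 := by
    have hpos : 0 < d + 2 * s * a := by nlinarith
    have h3 : t * (d + 2 * s * a) = 0 := by nlinarith [h2]
    rcases mul_eq_zero.mp h3 with h | h
    · exact h
    · exact absurd h (ne_of_gt hpos)
  rw [ht] at h1
  nlinarith [mul_nonneg hs (mul_nonneg hs ha.le), mul_nonneg hs hd.le]

theorem block_companion_hurwitz {n : ℕ}
    (Gp Gd : Matrix (Fin n) (Fin n) ℝ)
    (hGp : Gp.PosDef) (hGd : Gd.PosDef) (hcomm : Gp * Gd = Gd * Gp) :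
    let F : Matrix (Fin n ⊕ Fin n) (Fin n ⊕ Fin n) ℝ :=
      Matrix.fromBlocks 0 1 (-Gp) (-Gd)
    ∀ μ : ℂ, ((F.map (Complex.ofReal)).charpoly).IsRoot μ → μ.re < 0 := by
  intro F μ hroot
  classical
  set Gp' : Matrix (Fin n) (Fin n) ℂ := Gp.map Complex.ofReal with hGp'
  set Gd' : Matrix (Fin n) (Fin n) ℂ := Gd.map Complex.ofReal with hGd'
  set F' : Matrix (Fin n ⊕ Fin n) (Fin n ⊕ Fin n) ℂ := F.map Complex.ofReal with hF'def
  have hF' : F' = Matrix.fromBlocks 0 1 (-Gp') (-Gd') := by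
    ext i j
    cases i <;> cases j <;>
      simp [hF'def, F, hGp', hGd', Matrix.map_apply, Matrix.one_apply, apply_ite Complex.ofReal]
  have hdet : (μ • (1 : Matrix (Fin n ⊕ Fin n) (Fin n ⊕ Fin n) ℂ) - F').det = 0 := by
    rw [← eval_charpoly']
    exact hroot
  obtain ⟨v, hv, hveq⟩ := (Matrix.exists_mulVec_eq_zero_iff).mpr hdet
  have hFv : F' *ᵥ v = μ • v := by
    have h := hveq
    rw [Matrix.sub_mulVec, Matrix.smul_mulVec, Matrix.one_mulVec, sub_eq_zero] at h
    exact h.symm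
  set x : Fin n → ℂ := fun i => v (Sum.inl i) with hxdef
  set y : Fin n → ℂ := fun i => v (Sum.inr i) with hydef
  have hv' : v = Sum.elim x y := by funext i; cases i <;> rfl
  rw [hF', hv', Matrix.fromBlocks_mulVec] at hFv
  have h1 : ∀ i, y i = μ * x i := by
    intro i
    have := congrFun hFv (Sum.inl i)
    simpa using this
  have hy : y = μ • x := by funext i; simpa using h1 i
  have h2 : ∀ i, ((-Gp') *ᵥ x + (-Gd') *ᵥ y) i = μ * y i := by
    intro i
    have := congrFun hFv (Sum.inr i)
    simpa using this
  have hx : x ≠ 0 := by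
    intro h0
    apply hv
    have hy0 : y = 0 := by rw [hy, h0, smul_zero]
    rw [hv', h0, hy0]
    funext i; cases i <;> rfl
  have hquad : ∀ i, (Gp' *ᵥ x) i + μ * (Gd' *ᵥ x) i + μ ^ 2 * x i = 0 := by
    intro i
    have h := h2 i
    rw [hy] at h
    rw [Matrix.mulVec_smul] at h
    simp only [Matrix.neg_mulVec, Pi.add_apply, Pi.neg_apply, Pi.smul_apply,
      smul_eq_mul] at h
    linear_combination -h
  have hdot : (star x ⬝ᵥ Gp' *ᵥ x) + μ * (star x ⬝ᵥ Gd' *ᵥ x) + μ ^ 2 * (star x ⬝ᵥ x) = 0 := by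
    have : star x ⬝ᵥ (fun i => (Gp' *ᵥ x) i + μ * (Gd' *ᵥ x) i + μ ^ 2 * x i) = 0 := by
      have h0 : (fun i => (Gp' *ᵥ x) i + μ * (Gd' *ᵥ x) i + μ ^ 2 * x i) = (0 : Fin n → ℂ) := by
        funext i; exact hquad i
      rw [h0, dotProduct_zero]
    rw [← this]
    simp only [dotProduct, Finset.mul_sum, ← Finset.sum_add_distrib]
    refine Finset.sum_congr rfl fun i _ => ?_
    ring
  have hP := posdef_dot Gp hGp x hx
  have hD := posdef_dot Gd hGd x hx
  have hAone := posdef_dot 1 Matrix.PosDef.one x hx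
  have hone : ((1 : Matrix (Fin n) (Fin n) ℝ).map Complex.ofReal) = 1 := by
    ext i j
    by_cases h : i = j <;> simp [Matrix.map_apply, Matrix.one_apply, h]
  rw [hone, Matrix.one_mulVec] at hAone
  have hPc : (star x ⬝ᵥ Gp' *ᵥ x) = (((star x ⬝ᵥ Gp' *ᵥ x).re : ℝ) : ℂ) := by
    refine Complex.ext (by simp) ?_
    simp only [Complex.ofReal_im]; exact hP.2
  have hDc : (star x ⬝ᵥ Gd' *ᵥ x) = (((star x ⬝ᵥ Gd' *ᵥ x).re : ℝ) : ℂ) := by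
    refine Complex.ext (by simp) ?_
    simp only [Complex.ofReal_im]; exact hD.2
  have hAc : (star x ⬝ᵥ x) = (((star x ⬝ᵥ x).re : ℝ) : ℂ) := by
    refine Complex.ext (by simp) ?_
    simp [hAone.2]
  rw [hPc, hDc, hAc] at hdot
  exact quad_root_neg_re hAone.1 hD.1 hP.1 hdot
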